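/- arXiv:2002.06796 — 2 statements merged into one kernel-verified Lean document; each statement's English description precedes it below -/
import Mathlib

section
/- For all integers n and k with 2 ≤ k < n, the following inequality holds (over the real numbers): Σ_{d=⌈n/(k+1)⌉}^{⌊(n-1)/(k-1)⌋} ((k+1)d - n) < (1/2)·( (4n² + n(k³+k²-5k-5) - k³ + 3k + 2)/(k-1)² + 3nk + k² + k ). In particular, this sum is O(n²/k² + kn). -/
/-- Sum of a linear function over an interval of naturals. -/
lemma sum_lin (K N : ℝ) (a b : ℕ) (h : a ≤ b + 1) :
    (∑ d ∈ Finset.Icc a b, (K * (d : ℝ) - N))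
      = ((b : ℝ) + 1 - a) * (K * (a : ℝ) - N)
        + K * (((b : ℝ) + 1 - a) * ((b : ℝ) - a)) / 2 := by
  have hIcc : Finset.Icc a b = Finset.Ico a (b + 1) := by
    rw [Finset.Ico_add_one_right_eq_Icc]
  rw [hIcc, Finset.sum_Ico_eq_sum_range]
  have hm : ((b + 1 - a : ℕ) : ℝ) = (b : ℝ) + 1 - a := by
    push_cast [Nat.cast_sub h]
    ring
  have key : ∀ m : ℕ, (∑ i ∈ Finset.range m, (K * ((a + i : ℕ) : ℝ) - N))
      = (m : ℝ) * (K * (a : ℝ) - N) + K * ((m : ℝ) * ((m : ℝ) - 1)) / 2 := by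
    intro m
    induction m with
    | zero => simp
    | succ m ih =>
      rw [Finset.sum_range_succ, ih]
      push_cast
      ring
  rw [key (b + 1 - a), hm]
  ring

/-- The key polynomial inequality, proved via an explicit Positivstellensatz
certificate. -/
lemma key_poly (n k u v : ℝ) (hk : 2 ≤ k) (hn : k + 1 ≤ n) (hu0 : 0 ≤ u) (huk : u ≤ k)
    (hv : 0 ≤ v) (hg : u * (k - 1) ≤ 2 * n - (k + 1) * (1 + v)) :
    (2 * n - (k + 1) * (1 + v) - u * (k - 1) + k ^ 2 - 1)
        * (u * (k - 1) + 2 * n - (k + 1) * (1 + v))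
      < (4 * n ^ 2 + n * (k ^ 3 + k ^ 2 - 5 * k - 5) - k ^ 3 + 3 * k + 2
          + (3 * n * k + k ^ 2 + k) * (k - 1) ^ 2) * (k + 1) := by
  have e1 : (0:ℝ) ≤ n - k - 1 := by linarith
  have e2 : (0:ℝ) ≤ k - 2 := by linarith
  have e4 : (0:ℝ) ≤ k - u := by linarith
  have e6 : (0:ℝ) ≤ 2 * n - (k + 1) * (1 + v) - u * (k - 1) := by linarith
  nlinarith [e1,
    (mul_nonneg e1 e1),
    (mul_nonneg e1 (mul_nonneg e1 e2)),
    (mul_nonneg e1 e2),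
    (mul_nonneg e1 (mul_nonneg e2 e2)),
    (mul_nonneg e1 (mul_nonneg e2 (mul_nonneg e2 e2))),
    (mul_nonneg e1 (mul_nonneg e2 (mul_nonneg e2 (mul_nonneg e2 e2)))),
    (mul_nonneg e1 (mul_nonneg e2 hu0)),
    (mul_nonneg e1 (mul_nonneg e2 hv)),
    (mul_nonneg e1 hu0),
    (mul_nonneg e1 (mul_nonneg hu0 e4)),
    (mul_nonneg e1 hv),
    e2,
    (mul_nonneg e2 e2),
    (mul_nonneg e2 (mul_nonneg e2 e2)),
    (mul_nonneg e2 (mul_nonneg e2 (mul_nonneg e2 e2))),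
    (mul_nonneg e2 (mul_nonneg e2 (mul_nonneg e2 (mul_nonneg e2 e2)))),
    (mul_nonneg e2 (mul_nonneg e2 (mul_nonneg e2 hv))),
    (mul_nonneg e2 (mul_nonneg e2 (mul_nonneg hu0 hu0))),
    (mul_nonneg e2 (mul_nonneg e2 e4)),
    (mul_nonneg e2 (mul_nonneg e2 hv)),
    (mul_nonneg e2 (mul_nonneg e2 e6)),
    (mul_nonneg e2 (mul_nonneg hu0 hu0)),
    (mul_nonneg e2 (mul_nonneg hu0 (mul_nonneg hu0 hv))),
    (mul_nonneg e2 (mul_nonneg hu0 hv)),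
    (mul_nonneg e2 e4),
    (mul_nonneg e2 (mul_nonneg e4 e6)),
    (mul_nonneg e2 hv),
    (mul_nonneg e2 (mul_nonneg hv e6)),
    (mul_nonneg hu0 (mul_nonneg hu0 (mul_nonneg hu0 hu0))),
    (mul_nonneg hu0 (mul_nonneg hu0 hv)),
    (mul_nonneg hu0 (mul_nonneg e4 (mul_nonneg e4 e4))),
    (mul_nonneg hu0 hv),
    (mul_nonneg e4 e4),
    (mul_nonneg e4 (mul_nonneg e4 e6)),
    hv,
    (mul_nonneg hv e6)]

/-- For `2 ≤ k < n`, the sum `∑_{d=⌈n/(k+1)⌉}^{⌊(n-1)/(k-1)⌋} ((k+1)d - n)` is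
strictly less than
`(1/2)((4n² + n(k³+k²-5k-5) - k³ + 3k + 2)/(k-1)² + 3nk + k² + k)`. -/
theorem stmt_11 (n k : ℕ) (hk : 2 ≤ k) (hkn : k < n) :
    (∑ d ∈ Finset.Icc ((n + k) / (k + 1)) ((n - 1) / (k - 1)),
        (((k : ℝ) + 1) * (d : ℝ) - (n : ℝ)))
      < (1 / 2) * ((4 * (n : ℝ) ^ 2 + (n : ℝ) * ((k : ℝ) ^ 3 + (k : ℝ) ^ 2 - 5 * (k : ℝ) - 5)
            - (k : ℝ) ^ 3 + 3 * (k : ℝ) + 2) / ((k : ℝ) - 1) ^ 2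
          + 3 * (n : ℝ) * (k : ℝ) + (k : ℝ) ^ 2 + (k : ℝ)) := by
  set a : ℕ := (n + k) / (k + 1) with ha
  set b : ℕ := (n - 1) / (k - 1) with hb
  have hkR : (2 : ℝ) ≤ (k : ℝ) := by exact_mod_cast hk
  have hnR : (k : ℝ) < (n : ℝ) := by exact_mod_cast hkn
  have hnR' : (k : ℝ) + 1 ≤ (n : ℝ) := by
    have : k + 1 ≤ n := hkn
    exact_mod_cast this
  have hk1 : (0 : ℝ) < (k : ℝ) - 1 := by linarith
  have hpos : (0 : ℝ) < ((k : ℝ) - 1) ^ 2 := by positivity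
  by_cases hab : a ≤ b
  · -- nat division facts
    have hmod := Nat.div_add_mod (n + k) (k + 1)
    have hmlt : (n + k) % (k + 1) < k + 1 := Nat.mod_lt _ (Nat.succ_pos k)
    have h1 : n ≤ (k + 1) * ((n + k) / (k + 1)) := by omega
    have h2 : (k + 1) * ((n + k) / (k + 1)) ≤ n + k := by omega
    rw [← ha] at h1 h2
    have h3 : b * (k - 1) ≤ n - 1 := Nat.div_mul_le_self _ _
    -- cast to reals
    have h1R : (n : ℝ) ≤ ((k : ℝ) + 1) * a := by exact_mod_cast h1
    have h2R : ((k : ℝ) + 1) * a ≤ (n : ℝ) + k := by exact_mod_cast h2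
    have h3R : ((k : ℝ) - 1) * b ≤ (n : ℝ) - 1 := by
      have hk1' : 1 ≤ k := by omega
      have hn1' : 1 ≤ n := by omega
      have : ((b : ℕ) : ℝ) * ((k - 1 : ℕ) : ℝ) ≤ ((n - 1 : ℕ) : ℝ) := by exact_mod_cast h3
      rw [Nat.cast_sub hk1', Nat.cast_sub hn1', Nat.cast_one] at this
      linarith [this]
    have habR : (a : ℝ) ≤ (b : ℝ) := by exact_mod_cast hab
    rw [sum_lin ((k : ℝ) + 1) (n : ℝ) a b (by omega)]
    set α : ℝ := (a : ℝ)
    set β : ℝ := (b : ℝ)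
    -- introduce u and v
    set u : ℝ := ((k : ℝ) + 1) * α - n with hu
    set v : ℝ := ((n : ℝ) - 1) - ((k : ℝ) - 1) * β with hvdef
    have hu0 : (0 : ℝ) ≤ u := by simp only [hu]; linarith
    have huk : u ≤ (k : ℝ) := by simp only [hu]; linarith
    have hv : (0 : ℝ) ≤ v := by simp only [hvdef]; linarith
    have hg : u * ((k : ℝ) - 1) ≤ 2 * (n : ℝ) - ((k : ℝ) + 1) * (1 + v) := by
      simp only [hu, hvdef]
      nlinarith [mul_le_mul_of_nonneg_left habR (by linarith : (0:ℝ) ≤ ((k:ℝ)-1)*((k:ℝ)+1))]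
    have key := key_poly (n : ℝ) (k : ℝ) u v hkR hnR' hu0 huk hv hg
    have hd : (0:ℝ) < 2 * (((k : ℝ) - 1) ^ 2 * ((k : ℝ) + 1)) := by positivity
    have hid : ((β + 1 - α) * u + ((k : ℝ) + 1) * ((β + 1 - α) * (β - α)) / 2)
          * (2 * (((k : ℝ) - 1) ^ 2 * ((k : ℝ) + 1)))
        = (2 * (n : ℝ) - ((k : ℝ) + 1) * (1 + v) - u * ((k : ℝ) - 1) + (k : ℝ) ^ 2 - 1)
            * (u * ((k : ℝ) - 1) + 2 * (n : ℝ) - ((k : ℝ) + 1) * (1 + v)) := by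
      simp only [hu, hvdef]
      ring
    have hRHSeq : (1 / 2) * ((4 * (n : ℝ) ^ 2 + (n : ℝ) * ((k : ℝ) ^ 3 + (k : ℝ) ^ 2
            - 5 * (k : ℝ) - 5) - (k : ℝ) ^ 3 + 3 * (k : ℝ) + 2) / ((k : ℝ) - 1) ^ 2
          + 3 * (n : ℝ) * (k : ℝ) + (k : ℝ) ^ 2 + (k : ℝ))
        = ((4 * (n : ℝ) ^ 2 + (n : ℝ) * ((k : ℝ) ^ 3 + (k : ℝ) ^ 2 - 5 * (k : ℝ) - 5)
            - (k : ℝ) ^ 3 + 3 * (k : ℝ) + 2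
            + (3 * (n : ℝ) * (k : ℝ) + (k : ℝ) ^ 2 + (k : ℝ)) * ((k : ℝ) - 1) ^ 2)
            * ((k : ℝ) + 1)) / (2 * (((k : ℝ) - 1) ^ 2 * ((k : ℝ) + 1))) := by
      field_simp
      ring
    rw [hRHSeq, lt_div_iff₀ hd, hid]
    linarith [key]
  · rw [Finset.Icc_eq_empty (by omega), Finset.sum_empty]
    have hApos : (0 : ℝ) < 4 * (n : ℝ) ^ 2 + (n : ℝ) * ((k : ℝ) ^ 3 + (k : ℝ) ^ 2
        - 5 * (k : ℝ) - 5) - (k : ℝ) ^ 3 + 3 * (k : ℝ) + 2 := by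
      nlinarith [sq_nonneg ((k:ℝ) - 2), sq_nonneg ((n:ℝ) - (k:ℝ)), sq_nonneg ((n:ℝ) - 1),
        mul_pos hk1 hk1, mul_pos (mul_pos hk1 hk1) (sub_pos.mpr hnR)]
    have h2 := div_pos hApos hpos
    nlinarith
end

section
/- Let T be a string of length n, let c be a character, and let z be a position with 1 ≤ z ≤ n and T[z] = c. Let δ_c be the indicator sequence of c in T (δ_c[i] = 1 if T[i] = c and 0 otherwise) and let C(2z) = |{(x,y) : 1 ≤ x,y ≤ n, x+y = 2z, δ_c[x]·δ_c[y] = 1}| be the value of the acyclic convolution of δ_c with itself at index 2z. Then C(2z) = 2·|{d ≥ 1 : 1 ≤ z-d, z+d ≤ n, T[z-d] = T[z+d] = c}| + 1; that is, the number f[z] of 3-sub-cadences (i,d) of character c whose middle position i+d equals z is exactly (C(2z)-1)/2. -/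
/-- For a position `z` with `T[z] = c`, the convolution count `C(2z)` of the
indicator of `c` with itself at index `2z` equals twice the number of distances
`d` with `T[z-d] = T[z+d] = c` plus one; hence the number of 3-sub-cadences of
character `c` with middle position `z` is exactly `(C(2z) - 1)/2`. -/
theorem stmt_12 {A : Type*} [DecidableEq A] (T : ℕ → A) (n : ℕ) (c : A)
    (z : ℕ) (hz1 : 1 ≤ z) (hz2 : z ≤ n) (hzc : T z = c) :
    (((Finset.Icc 1 n) ×ˢ (Finset.Icc 1 n)).filter (fun p : ℕ × ℕ =>
        p.1 + p.2 = 2 * z ∧ T p.1 = c ∧ T p.2 = c)).card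
      = 2 * ((Finset.Icc 1 n).filter (fun d =>
          1 ≤ z - d ∧ z + d ≤ n ∧ T (z - d) = c ∧ T (z + d) = c)).card + 1
    ∧ (((Finset.Icc 1 n) ×ˢ (Finset.Icc 1 n)).filter (fun p : ℕ × ℕ =>
        p.1 + 2 * p.2 ≤ n ∧ T p.1 = c ∧ T (p.1 + p.2) = c ∧ T (p.1 + 2 * p.2) = c ∧
        p.1 + p.2 = z)).card
      = ((((Finset.Icc 1 n) ×ˢ (Finset.Icc 1 n)).filter (fun p : ℕ × ℕ =>
          p.1 + p.2 = 2 * z ∧ T p.1 = c ∧ T p.2 = c)).card - 1) / 2 := by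
  set S := (((Finset.Icc 1 n) ×ˢ (Finset.Icc 1 n)).filter (fun p : ℕ × ℕ =>
        p.1 + p.2 = 2 * z ∧ T p.1 = c ∧ T p.2 = c)) with hS
  set D := ((Finset.Icc 1 n).filter (fun d =>
          1 ≤ z - d ∧ z + d ≤ n ∧ T (z - d) = c ∧ T (z + d) = c)) with hD
  have hmemS : ∀ p : ℕ × ℕ, p ∈ S ↔
      (1 ≤ p.1 ∧ p.1 ≤ n) ∧ (1 ≤ p.2 ∧ p.2 ≤ n) ∧ p.1 + p.2 = 2 * z ∧ T p.1 = c ∧ T p.2 = c := by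
    intro p
    simp [hS, Finset.mem_filter, Finset.mem_product, and_assoc]
  have hmemD : ∀ d : ℕ, d ∈ D ↔
      (1 ≤ d ∧ d ≤ n) ∧ 1 ≤ z - d ∧ z + d ≤ n ∧ T (z - d) = c ∧ T (z + d) = c := by
    intro d
    simp [hD, Finset.mem_filter, and_assoc]
  have key : S.card = 2 * D.card + 1 := by
    have h1 : (S.filter (fun p => p.1 < z)).card = D.card := by
      apply Finset.card_nbij' (fun p => z - p.1) (fun d => (z - d, z + d))
      · intro p hp
        rw [Finset.mem_coe, Finset.mem_filter] at hp
        obtain ⟨hpS, hplt⟩ := hp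
        rw [hmemS] at hpS
        obtain ⟨⟨h11, h12⟩, ⟨h21, h22⟩, hsum, hc1, hc2⟩ := hpS
        simp only [Finset.mem_coe, hmemD]
        have hd1 : 1 ≤ z - p.1 := by omega
        have hzd : z - (z - p.1) = p.1 := by omega
        have hzd2 : z + (z - p.1) = p.2 := by omega
        refine ⟨⟨by omega, by omega⟩, by omega, by omega, ?_, ?_⟩
        · rw [hzd]; exact hc1
        · rw [hzd2]; exact hc2
      · intro d hd
        rw [Finset.mem_coe, hmemD] at hd
        obtain ⟨⟨hd1, hd2⟩, hzd1, hzd2, hc1, hc2⟩ := hd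
        simp only [Finset.mem_coe, Finset.mem_filter, hmemS]
        refine ⟨⟨⟨by omega, by omega⟩, ⟨by omega, by omega⟩, by omega, hc1, hc2⟩, by omega⟩
      · intro p hp
        rw [Finset.mem_coe, Finset.mem_filter] at hp
        obtain ⟨hpS, hplt⟩ := hp
        rw [hmemS] at hpS
        obtain ⟨⟨h11, h12⟩, ⟨h21, h22⟩, hsum, _, _⟩ := hpS
        have : z - (z - p.1) = p.1 := by omega
        have : z + (z - p.1) = p.2 := by omega
        ext <;> simp <;> omega
      · intro d hd
        rw [Finset.mem_coe, hmemD] at hd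
        simp only
        omega
    have h2 : ((S.filter (fun p => ¬ p.1 < z)).filter (fun p => p.1 < z + 1)).card = 1 := by
      rw [Finset.card_eq_one]
      refine ⟨(z, z), ?_⟩
      ext p
      simp only [Finset.mem_filter, Finset.mem_singleton, hmemS]
      constructor
      · rintro ⟨⟨⟨_, _, hsum, _, _⟩, h⟩, h2⟩
        have : p.1 = z := by omega
        have : p.2 = z := by omega
        ext <;> simp [*]
      · rintro rfl
        exact ⟨⟨⟨⟨hz1, hz2⟩, ⟨hz1, hz2⟩, by ring, hzc, hzc⟩, by omega⟩, by omega⟩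
    have h3 : ((S.filter (fun p => ¬ p.1 < z)).filter (fun p => ¬ p.1 < z + 1)).card = D.card := by
      apply Finset.card_nbij' (fun p => p.1 - z) (fun d => (z + d, z - d))
      · intro p hp
        simp only [Finset.mem_coe, Finset.mem_filter, hmemS] at hp
        obtain ⟨⟨⟨⟨h11, h12⟩, ⟨h21, h22⟩, hsum, hc1, hc2⟩, hge⟩, hgt⟩ := hp
        simp only [Finset.mem_coe, hmemD]
        have e1 : z - (p.1 - z) = p.2 := by omega
        have e2 : z + (p.1 - z) = p.1 := by omega
        refine ⟨⟨by omega, by omega⟩, by omega, by omega, ?_, ?_⟩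
        · rw [e1]; exact hc2
        · rw [e2]; exact hc1
      · intro d hd
        rw [Finset.mem_coe, hmemD] at hd
        obtain ⟨⟨hd1, hd2⟩, hzd1, hzd2, hc1, hc2⟩ := hd
        simp only [Finset.mem_coe, Finset.mem_filter, hmemS]
        refine ⟨⟨⟨⟨by omega, by omega⟩, ⟨by omega, by omega⟩, by omega, hc2, hc1⟩, by omega⟩, by omega⟩
      · intro p hp
        simp only [Finset.mem_coe, Finset.mem_filter, hmemS] at hp
        obtain ⟨⟨⟨⟨h11, h12⟩, ⟨h21, h22⟩, hsum, _, _⟩, hge⟩, hgt⟩ := hp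
        ext <;> simp <;> omega
      · intro d hd
        rw [Finset.mem_coe, hmemD] at hd
        simp only
        omega
    have hsplit1 := Finset.card_filter_add_card_filter_not
      (s := S) (p := fun p : ℕ × ℕ => p.1 < z)
    have hsplit2 := Finset.card_filter_add_card_filter_not
      (s := S.filter (fun p => ¬ p.1 < z)) (p := fun p : ℕ × ℕ => p.1 < z + 1)
    omega
  refine ⟨key, ?_⟩
  have h4 : (((Finset.Icc 1 n) ×ˢ (Finset.Icc 1 n)).filter (fun p : ℕ × ℕ =>
        p.1 + 2 * p.2 ≤ n ∧ T p.1 = c ∧ T (p.1 + p.2) = c ∧ T (p.1 + 2 * p.2) = c ∧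
        p.1 + p.2 = z)).card = D.card := by
    apply Finset.card_nbij' (fun p => p.2) (fun d => (z - d, d))
    · intro p hp
      simp only [Finset.mem_coe, Finset.mem_filter, Finset.mem_product, Finset.mem_Icc] at hp
      obtain ⟨⟨⟨h11, h12⟩, h21, h22⟩, hle, hc1, hc2, hc3, hmid⟩ := hp
      simp only [Finset.mem_coe, hmemD]
      have e1 : z - p.2 = p.1 := by omega
      have e2 : z + p.2 = p.1 + 2 * p.2 := by omega
      refine ⟨⟨h21, h22⟩, by omega, by omega, ?_, ?_⟩
      · rw [e1]; exact hc1
      · rw [e2]; exact hc3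
    · intro d hd
      rw [Finset.mem_coe, hmemD] at hd
      obtain ⟨⟨hd1, hd2⟩, hzd1, hzd2, hc1, hc2⟩ := hd
      simp only [Finset.mem_coe, Finset.mem_filter, Finset.mem_product, Finset.mem_Icc]
      have e1 : z - d + d = z := by omega
      have e2 : z - d + 2 * d = z + d := by omega
      refine ⟨⟨⟨by omega, by omega⟩, hd1, hd2⟩, by omega, hc1, ?_, ?_, by omega⟩
      · rw [e1]; exact hzc
      · rw [e2]; exact hc2
    · intro p hp
      simp only [Finset.mem_coe, Finset.mem_filter, Finset.mem_product, Finset.mem_Icc] at hp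
      obtain ⟨⟨⟨h11, h12⟩, h21, h22⟩, hle, _, _, _, hmid⟩ := hp
      ext <;> simp <;> omega
    · intro d hd
      simp only
  rw [h4, key]
  omega
end
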